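/- Let λ₁, λ₂, λ₃, λ₄ > 0, θ > 0, c₁, c₂, c₃, c₄ > 0, u* ∈ ℝ, and write φᵢ = φ_{λᵢ} where φ_λ(x) = λ(e^x − 1). Let η₁, η₂, η₃, η₄ : [0,∞) → ℝ be differentiable and set z₁ = η₃ − η₂, z₂ = η₄ − z₁, z₃ = η₁ − z₂. Assume φ₁(z₃(t)) ≠ 0 for all t and that the closed-loop system η₁′ = u* − u − φ₂(η₂), η₂′ = −φ₃(η₃), η₃′ = −φ₄(η₄), η₄′ = −φ₁(η₁) holds, where u = u* + (1/φ₁(z₃))·(c₄·φ₁(z₃)² + θc₁·φ₂(η₂)² + θc₃·φ₄(z₂)² + θc₂·φ₃(z₁)²) + ((φ₁(z₃) − θφ₄(z₂))/φ₁(z₃))·φ₁(η₁) − φ₂(η₂) + ((φ₁(z₃) − θφ₄(z₂) + θφ₃(z₁) − θφ₂(η₂))/φ₁(z₃))·φ₃(η₃) + ((θφ₄(z₂) − φ₁(z₃) − θφ₃(z₁))/φ₁(z₃))·φ₄(η₄). Then, with V₄(η₂, z₁, z₂, z₃) = θλ₂ω̃(η₂) + θλ₃ω̃(z₁) + θλ₄ω̃(z₂)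 + λ₁ω̃(z₃) and ω̃(x) = e^x − 1 − x, one has for every t: d/dt V₄ = −θc₁·φ₂(η₂)² − θc₂·φ₃(z₁)² − θc₃·φ₄(z₂)² − c₄·φ₁(z₃)². -/

import Mathlib

/-- `φ_λ(x) = λ(e^x − 1)`. -/
noncomputable def phiL (l x : ℝ) : ℝ := l * (Real.exp x - 1)

/-- `ω̃(x) = e^x − 1 − x`. -/
noncomputable def omegaTilde (x : ℝ) : ℝ := Real.exp x - 1 - x


lemma hasDerivAt_omegaTilde (x : ℝ) : HasDerivAt omegaTilde (Real.exp x - 1) x := by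
  exact ((Real.hasDerivAt_exp x).sub_const 1).sub (hasDerivAt_id x)

set_option maxHeartbeats 2000000 in
/-- Lyapunov dissipation identity of Proposition 3.17 (four-species non-transitive
competition, `ψᵢ ≡ 0`): along the closed loop with the backstepping control `u`,
`d/dt V₄ = −θc₁φ₂(η₂)² − θc₂φ₃(z₁)² − θc₃φ₄(z₂)² − c₄φ₁(z₃)²`. -/
theorem stmt4 (l1 l2 l3 l4 θ c1 c2 c3 c4 ustar : ℝ)
    (hl1 : 0 < l1) (hl2 : 0 < l2) (hl3 : 0 < l3) (hl4 : 0 < l4) (hθ : 0 < θ)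
    (hc1 : 0 < c1) (hc2 : 0 < c2) (hc3 : 0 < c3) (hc4 : 0 < c4)
    (η1 η2 η3 η4 z1 z2 z3 u : ℝ → ℝ)
    (hz1 : ∀ t, z1 t = η3 t - η2 t)
    (hz2 : ∀ t, z2 t = η4 t - z1 t)
    (hz3 : ∀ t, z3 t = η1 t - z2 t)
    (hne : ∀ t, 0 ≤ t → phiL l1 (z3 t) ≠ 0)
    (hu : ∀ t, u t = ustar
      + (1 / phiL l1 (z3 t)) *
          (c4 * (phiL l1 (z3 t))^2 + θ * c1 * (phiL l2 (η2 t))^2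
            + θ * c3 * (phiL l4 (z2 t))^2 + θ * c2 * (phiL l3 (z1 t))^2)
      + ((phiL l1 (z3 t) - θ * phiL l4 (z2 t)) / phiL l1 (z3 t)) * phiL l1 (η1 t)
      - phiL l2 (η2 t)
      + ((phiL l1 (z3 t) - θ * phiL l4 (z2 t) + θ * phiL l3 (z1 t)
            - θ * phiL l2 (η2 t)) / phiL l1 (z3 t)) * phiL l3 (η3 t)
      + ((θ * phiL l4 (z2 t) - phiL l1 (z3 t) - θ * phiL l3 (z1 t))
            / phiL l1 (z3 t)) * phiL l4 (η4 t))
    (hd1 : ∀ t, 0 ≤ t →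
      HasDerivWithinAt η1 (ustar - u t - phiL l2 (η2 t)) (Set.Ici 0) t)
    (hd2 : ∀ t, 0 ≤ t →
      HasDerivWithinAt η2 (-(phiL l3 (η3 t))) (Set.Ici 0) t)
    (hd3 : ∀ t, 0 ≤ t →
      HasDerivWithinAt η3 (-(phiL l4 (η4 t))) (Set.Ici 0) t)
    (hd4 : ∀ t, 0 ≤ t →
      HasDerivWithinAt η4 (-(phiL l1 (η1 t))) (Set.Ici 0) t) :
    ∀ t, 0 ≤ t → HasDerivWithinAt
      (fun s => θ * l2 * omegaTilde (η2 s) + θ * l3 * omegaTilde (z1 s)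
        + θ * l4 * omegaTilde (z2 s) + l1 * omegaTilde (z3 s))
      (-(θ * c1 * (phiL l2 (η2 t))^2) - θ * c2 * (phiL l3 (z1 t))^2
        - θ * c3 * (phiL l4 (z2 t))^2 - c4 * (phiL l1 (z3 t))^2)
      (Set.Ici 0) t := by
  intro t ht
  have h1 := hd1 t ht
  have h2 := hd2 t ht
  have h3 := hd3 t ht
  have h4 := hd4 t ht
  have hz1' : HasDerivWithinAt (fun s => η3 s - η2 s)
      (-(phiL l4 (η4 t)) - -(phiL l3 (η3 t))) (Set.Ici 0) t := h3.sub h2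
  have hz2' : HasDerivWithinAt (fun s => η4 s - (η3 s - η2 s))
      (-(phiL l1 (η1 t)) - (-(phiL l4 (η4 t)) - -(phiL l3 (η3 t)))) (Set.Ici 0) t :=
    h4.sub hz1'
  have hz3' : HasDerivWithinAt (fun s => η1 s - (η4 s - (η3 s - η2 s)))
      ((ustar - u t - phiL l2 (η2 t)) -
        (-(phiL l1 (η1 t)) - (-(phiL l4 (η4 t)) - -(phiL l3 (η3 t))))) (Set.Ici 0) t :=
    h1.sub hz2'
  have hA := ((hasDerivAt_omegaTilde (η2 t)).comp_hasDerivWithinAt t h2).const_mul (θ * l2)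
  have hB := ((hasDerivAt_omegaTilde (η3 t - η2 t)).comp_hasDerivWithinAt t hz1').const_mul (θ * l3)
  have hC := ((hasDerivAt_omegaTilde (η4 t - (η3 t - η2 t))).comp_hasDerivWithinAt t hz2').const_mul (θ * l4)
  have hD := ((hasDerivAt_omegaTilde (η1 t - (η4 t - (η3 t - η2 t)))).comp_hasDerivWithinAt t hz3').const_mul l1
  have hV := ((hA.add hB).add hC).add hD
  have hne' : phiL l1 (η1 t - (η4 t - (η3 t - η2 t))) ≠ 0 := by
    have := hne t ht
    rwa [hz3, hz2, hz1] at this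
  simp only [hz1, hz2, hz3]
  convert hV using 1
  case e'_4 => rfl
  case e'_5 => rfl
  case e'_8 => rfl
  have hE : Real.exp (η1 t - (η4 t - (η3 t - η2 t))) - 1 ≠ 0 := by
    intro h
    exact hne' (by simp [phiL, h])
  rw [hu t]
  simp only [phiL, hz1, hz2, hz3, Function.comp_apply]
  generalize Real.exp (η1 t - (η4 t - (η3 t - η2 t))) = A at hE ⊢
  generalize Real.exp (η4 t - (η3 t - η2 t)) = B
  generalize Real.exp (η3 t - η2 t) = C
  generalize Real.exp (η2 t) = D
  generalize Real.exp (η1 t) = P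
  generalize Real.exp (η3 t) = Q
  generalize Real.exp (η4 t) = R
  have hE' : A - 1 ≠ 0 := hE
  field_simp
  ring
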